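/- For every fixed t ≥ 0, the map x ↦ θ_x(t) from D to [0,∞] is measurable with respect to the Kolmogorov σ-algebra on D and the Borel σ-algebra on the extended nonnegative reals. -/
import Mathlib


open scoped NNReal ENNReal Classical
open Filter Topology

noncomputable section

/-- Left limit of `x` at `t`, with the convention `x(0−) = x(0)`. -/
def leftLimit {d : ℕ} (x : ℝ≥0 → Fin d → ℝ) (t : ℝ≥0) : Fin d → ℝ :=
  if 0 < t then limUnder (nhdsWithin t (Set.Iio t)) x else x 0

/-- `x : [0,∞) → ℝ^d` is càdlàg: right-continuous everywhere, with left limits at every `t > 0`. -/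
def IsCadlag {d : ℕ} (x : ℝ≥0 → Fin d → ℝ) : Prop :=
  (∀ t : ℝ≥0, ContinuousWithinAt x (Set.Ici t) t) ∧
  (∀ t : ℝ≥0, 0 < t →
    ∃ L : Fin d → ℝ, Filter.Tendsto x (nhdsWithin t (Set.Iio t)) (nhds L))

/-- `x` is constant on the set `I`. -/
def ConstOn {d : ℕ} (x : ℝ≥0 → Fin d → ℝ) (I : Set ℝ≥0) : Prop :=
  ∀ s ∈ I, ∀ s' ∈ I, x s = x s'

/-- `η_x(t) = sup {s ∈ [0,t) : x(s) ≠ x(t)}`, with the convention `sup ∅ = 0`. -/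
def eta {d : ℕ} (x : ℝ≥0 → Fin d → ℝ) (t : ℝ≥0) : ℝ≥0 :=
  sSup {s : ℝ≥0 | s < t ∧ x s ≠ x t}

/-- The set of discontinuity points of `x`: the `t > 0` where `x(t) ≠ x(t−)`. -/
def disc {d : ℕ} (x : ℝ≥0 → Fin d → ℝ) : Set ℝ≥0 :=
  {t : ℝ≥0 | 0 < t ∧ x t ≠ leftLimit x t}

/-- `θ_x(t) = inf {s ≥ t : x(s) ≠ x(t−)} ∈ [0,∞]`, with the convention `inf ∅ = ∞`. -/
def theta {d : ℕ} (x : ℝ≥0 → Fin d → ℝ) (t : ℝ≥0) : ℝ≥0∞ :=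
  sInf ((fun s : ℝ≥0 => (s : ℝ≥0∞)) '' {s : ℝ≥0 | t ≤ s ∧ x s ≠ leftLimit x t})

/-- The map `f` replacing each "stair" of `x` by the linear interpolation of its endpoints:
`f(x)(t) = x(η_x(t)) + ((t − η_x(t))/(θ_x(t) − η_x(t))) • (x(θ_x(t)) − x(η_x(t)))`,
with `f(x)(t) = x(t)` when `θ_x(t) = η_x(t)` or `θ_x(t) = ∞`. -/
def fmap {d : ℕ} (x : ℝ≥0 → Fin d → ℝ) : ℝ≥0 → Fin d → ℝ := fun t =>
  if theta x t = ((eta x t : ℝ≥0) : ℝ≥0∞) ∨ theta x t = ⊤ then x t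
  else x (eta x t) +
    (((t : ℝ) - (eta x t : ℝ)) / ((theta x t).toReal - (eta x t : ℝ))) •
      (x (theta x t).toNNReal - x (eta x t))

/-- The space `D` of càdlàg functions `[0,∞) → ℝ^d`. -/
def Cadlag (d : ℕ) : Type := {x : ℝ≥0 → Fin d → ℝ // IsCadlag x}

/-- The Kolmogorov σ-algebra on `D`: the trace of the σ-algebra generated by the coordinate
evaluation maps `x ↦ x(t)`, `t ≥ 0` (i.e. of the product σ-algebra). -/
instance (d : ℕ) : MeasurableSpace (Cadlag d) :=
  MeasurableSpace.comap (fun x : Cadlag d => x.1)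
    (inferInstance : MeasurableSpace (ℝ≥0 → Fin d → ℝ))

/-- For every fixed `t ≥ 0`, the map `x ↦ θ_x(t)` is measurable from `D` (with the Kolmogorov
σ-algebra) to `[0,∞]` (with the Borel σ-algebra on the extended nonnegative reals). -/
-- auxiliary
lemma measurable_val' (d : ℕ) : Measurable (fun x : Cadlag d => x.1) :=
  measurable_iff_comap_le.mpr le_rfl

lemma measurable_eval' (d : ℕ) (s : ℝ≥0) : Measurable (fun x : Cadlag d => x.1 s) :=
  (measurable_pi_apply s).comp (measurable_val' d)

lemma tendsto_leftLimit {d : ℕ} {x : ℝ≥0 → Fin d → ℝ} (hx : IsCadlag x) {t : ℝ≥0}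
    (ht : 0 < t) : Tendsto x (𝓝[<] t) (𝓝 (leftLimit x t)) := by
  obtain ⟨L, hL⟩ := hx.2 t ht
  have : NeBot (𝓝[<] t) := nhdsWithin_Iio_self_neBot' ⟨0, ht⟩
  have h : leftLimit x t = L := by
    rw [leftLimit, if_pos ht]
    exact hL.limUnder_eq
  rw [h]; exact hL

lemma measurable_leftLimit (d : ℕ) (t : ℝ≥0) :
    Measurable (fun x : Cadlag d => leftLimit x.1 t) := by
  by_cases ht : 0 < t
  · have : NeBot (𝓝[<] t) := nhdsWithin_Iio_self_neBot' ⟨0, ht⟩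
    obtain ⟨u, hu⟩ := exists_seq_tendsto (𝓝[<] t)
    refine measurable_of_tendsto_metrizable (f := fun n (x : Cadlag d) => x.1 (u n))
      (fun n => measurable_eval' d (u n)) ?_
    rw [tendsto_pi_nhds]
    intro x
    exact (tendsto_leftLimit x.2 ht).comp hu
  · have : (fun x : Cadlag d => leftLimit x.1 t) = fun x : Cadlag d => x.1 0 := by
      funext x; rw [leftLimit, if_neg ht]
    rw [this]; exact measurable_eval' d 0

lemma theta_eq {d : ℕ} {x : ℝ≥0 → Fin d → ℝ} (hx : IsCadlag x) (t : ℝ≥0) :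
    theta x t = ⨅ r : ℚ≥0,
      if x (t + (r : ℝ≥0)) ≠ leftLimit x t then ((t + (r : ℝ≥0) : ℝ≥0) : ℝ≥0∞) else ⊤ := by
  set L := leftLimit x t
  apply le_antisymm
  · refine le_iInf fun r => ?_
    by_cases h : x (t + (r : ℝ≥0)) ≠ L
    · rw [if_pos h]
      exact sInf_le ⟨t + (r : ℝ≥0), ⟨le_self_add, h⟩, rfl⟩
    · rw [if_neg h]; exact le_top
  · refine le_sInf ?_
    rintro b ⟨s, ⟨hts, hsL⟩, rfl⟩
    refine ENNReal.le_of_forall_pos_le_add fun ε hε _ => ?_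
    -- find rational point s' = t + r in (s, s + ε) with x s' ≠ L, or use right continuity
    have hrc : ∀ᶠ s' in 𝓝[>] s, x s' ≠ L := by
      have h1 : ∀ᶠ s' in 𝓝[≥] s, x s' ≠ L := by
        have := hx.1 s
        exact this (isOpen_ne.mem_nhds hsL)
      exact h1.filter_mono (nhdsWithin_mono s Set.Ioi_subset_Ici_self)
    have hlt : ∀ᶠ s' in 𝓝[>] s, s' < s + ε := by
      refine eventually_nhdsWithin_of_eventually_nhds ?_
      exact Filter.Tendsto.eventually_lt_const (lt_add_of_pos_right s hε) tendsto_id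
    have hfreq : ∃ᶠ s' in 𝓝[>] s, ∃ r : ℚ≥0, s' = t + (r : ℝ≥0) := by
      rw [frequently_iff]
      intro U hU
      obtain ⟨u', hsu', hsub⟩ := mem_nhdsGT_iff_exists_Ioo_subset.mp hU
      obtain ⟨q, hq1, hq2⟩ := exists_rat_btwn (show (s : ℝ) - t < (u' : ℝ) - t by
        have : (s : ℝ) < u' := hsu'
        linarith)
      have hq0 : (0 : ℚ) ≤ q := by
        have h1 : (0 : ℝ) ≤ (s : ℝ) - t := by
          have : (t : ℝ) ≤ s := hts
          linarith
        exact_mod_cast le_of_lt (lt_of_le_of_lt h1 hq1)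
      set r : ℚ≥0 := ⟨q, hq0⟩
      have hcast : ((r : ℝ≥0) : ℝ) = (q : ℝ) := by
        have h1 : ((r : ℝ≥0) : ℝ) = (r : ℝ) := map_nnratCast NNReal.toRealHom _
        rw [h1, ← Rat.cast_nnratCast]
        norm_num [r]
      refine ⟨t + (r : ℝ≥0), hsub ⟨?_, ?_⟩, r, rfl⟩
      · rw [← NNReal.coe_lt_coe]
        push_cast
        rw [hcast]; linarith
      · rw [← NNReal.coe_lt_coe]
        push_cast
        rw [hcast]; linarith
    obtain ⟨s', ⟨r, rfl⟩, hne, hlt'⟩ := hfreq.and_eventually (hrc.and hlt) |>.exists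
    calc (⨅ r : ℚ≥0, if x (t + (r : ℝ≥0)) ≠ L then ((t + (r : ℝ≥0) : ℝ≥0) : ℝ≥0∞) else ⊤)
        ≤ ((t + (r : ℝ≥0) : ℝ≥0) : ℝ≥0∞) := by
          refine iInf_le_of_le r ?_
          rw [if_pos hne]
      _ ≤ (s : ℝ≥0∞) + ε := by
          rw [← ENNReal.coe_add]
          exact_mod_cast le_of_lt hlt'

theorem measurable_theta (d : ℕ) (hd : 1 ≤ d) (t : ℝ≥0) :
    Measurable (fun x : Cadlag d => theta x.1 t) := by
  have heq : (fun x : Cadlag d => theta x.1 t) = fun x : Cadlag d =>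
      ⨅ r : ℚ≥0, if x.1 (t + (r : ℝ≥0)) ≠ leftLimit x.1 t
        then ((t + (r : ℝ≥0) : ℝ≥0) : ℝ≥0∞) else ⊤ := by
    funext x
    exact theta_eq x.2 t
  rw [heq]
  haveI : Countable ℚ≥0 := inferInstanceAs (Countable {q : ℚ // 0 ≤ q})
  refine Measurable.iInf fun r => ?_
  refine Measurable.ite ?_ measurable_const measurable_const
  have h1 : Measurable (fun x : Cadlag d => x.1 (t + (r : ℝ≥0))) := measurable_eval' d _
  have h2 := measurable_leftLimit d t
  exact (measurableSet_eq_fun h1 h2).compl
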